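/- If S is a maximal sum-free set in the elementary abelian 3-group G = (ℤ/3ℤ)^n (n ≥ 1), then G = S ∪ SS⁻¹ ∪ S⁻¹, where SS⁻¹ = {xy⁻¹ : x, y ∈ S} and S⁻¹ = {x⁻¹ : x ∈ S}. -/

import Mathlib

open Pointwise

/-- A subset `S` of an additive group is sum-free if for all `s₁, s₂ ∈ S`, `s₁ + s₂ ∉ S`. -/
def AddSumFree {G : Type*} [AddGroup G] (S : Set G) : Prop :=
  ∀ a ∈ S, ∀ b ∈ S, a + b ∉ S

/-- A maximal sum-free set: a (nonempty) sum-free set of maximum cardinality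
among all sum-free subsets. -/
def IsMaxAddSumFree {G : Type*} [AddGroup G] (S : Set G) : Prop :=
  S.Nonempty ∧ AddSumFree S ∧ ∀ T : Set G, AddSumFree T → T.ncard ≤ S.ncard

/-- If `S` is a maximal sum-free set in `(ℤ/3ℤ)^n`, then `G = S ∪ (S - S) ∪ (-S)`. -/
theorem maxSumFree_diff_neg_cover (n : ℕ) (hn : 1 ≤ n) (S : Set (Fin n → ZMod 3))
    (hS : IsMaxAddSumFree S) :
    S ∪ (S - S) ∪ (-S) = Set.univ := by
  obtain ⟨hne, hsf, hmax⟩ := hS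
  by_contra hcon
  have hex : ∃ x, x ∉ S ∪ (S - S) ∪ (-S) := by
    by_contra h
    push_neg at h
    exact hcon (Set.eq_univ_of_forall h)
  obtain ⟨x, hx⟩ := hex
  simp only [Set.mem_union, not_or] at hx
  obtain ⟨⟨hx1, hx2⟩, hx3⟩ := hx
  -- basic consequences
  have hsub : ∀ a b : Fin n → ZMod 3, a ∈ S → b ∈ S → a - b ≠ x := by
    intro a b ha hb h
    exact hx2 (h ▸ Set.sub_mem_sub ha hb)
  have h0S : (0 : Fin n → ZMod 3) ∉ S := by
    intro h
    exact hsf 0 h 0 h (by simpa using h)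
  have hzmod : ∀ a : ZMod 3, a + a = -a := by decide
  have hchar : ∀ v : Fin n → ZMod 3, v + v = -v := by
    intro v; funext i; exact hzmod (v i)
  set X1 : Set (Fin n → ZMod 3) := (fun v => x + v) '' S with hX1def
  set X2 : Set (Fin n → ZMod 3) := (fun v => -x + v) '' S with hX2def
  have hinj1 : Function.Injective (fun v : Fin n → ZMod 3 => x + v) :=
    fun a b h => by simpa using h
  have hinj2 : Function.Injective (fun v : Fin n → ZMod 3 => -x + v) :=
    fun a b h => by simpa using h
  have hcard1 : X1.ncard = S.ncard := Set.ncard_image_of_injective S hinj1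
  have hcard2 : X2.ncard = S.ncard := Set.ncard_image_of_injective S hinj2
  have hd1 : Disjoint S X1 := by
    rw [Set.disjoint_left]
    rintro a haS ⟨s, hs, rfl⟩
    exact hsub (x + s) s haS hs (by abel)
  have hd2 : Disjoint S X2 := by
    rw [Set.disjoint_left]
    rintro a haS ⟨s, hs, rfl⟩
    exact hsub s (-x + s) hs haS (by abel)
  have hd12 : Disjoint X1 X2 := by
    rw [Set.disjoint_left]
    rintro a ⟨s, hs, rfl⟩ ⟨t, ht, hst⟩
    -- x + s = -x + t  ⇒  s - t = -(x + x) = x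
    apply hsub s t hs ht
    have h2x : x + x = -x := hchar x
    have h' : -x + t = x + s := hst
    have ht' : t = -x + s := by
      rw [← h2x, add_assoc, ← h']
      abel
    rw [ht']
    abel
  -- 0 avoids all three sets
  have h0X1 : (0 : Fin n → ZMod 3) ∉ X1 := by
    rintro ⟨s, hs, h⟩
    apply hx3
    rw [Set.mem_neg]
    have : s = -x := by
      have := h
      simp only at this
      linear_combination (norm := abel) this
    rwa [← this]
  have h0X2 : (0 : Fin n → ZMod 3) ∉ X2 := by
    rintro ⟨s, hs, h⟩
    apply hx1
    have : s = x := (neg_add_eq_zero.mp (show -x + s = 0 from h)).symm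
    rwa [← this]
  -- the union avoids 0
  have hsubc : S ∪ X1 ∪ X2 ⊆ ({0}ᶜ : Set (Fin n → ZMod 3)) := by
    intro v hv
    simp only [Set.mem_compl_iff, Set.mem_singleton_iff]
    rintro rfl
    rcases hv with (h | h) | h
    · exact h0S h
    · exact h0X1 h
    · exact h0X2 h
  have hfin : ∀ A : Set (Fin n → ZMod 3), A.Finite := fun A => A.toFinite
  have hUcard : (S ∪ X1 ∪ X2).ncard = 3 * S.ncard := by
    rw [Set.ncard_union_eq (by exact Set.disjoint_union_left.mpr ⟨hd2, hd12⟩) (hfin _) (hfin _),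
        Set.ncard_union_eq hd1 (hfin _) (hfin _), hcard1, hcard2]
    ring
  have hle : 3 * S.ncard ≤ ({0}ᶜ : Set (Fin n → ZMod 3)).ncard := by
    rw [← hUcard]
    exact Set.ncard_le_ncard hsubc (hfin _)
  -- total count
  have htot : (Set.univ : Set (Fin n → ZMod 3)).ncard
      = ({0}ᶜ : Set (Fin n → ZMod 3)).ncard + 1 := by
    have : ({0}ᶜ : Set (Fin n → ZMod 3)) ∪ {0} = Set.univ :=
      Set.compl_union_self _
    rw [← this, Set.ncard_union_eq disjoint_compl_left (hfin _) (hfin _),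
        Set.ncard_singleton]
  -- the hyperplane coset
  set i0 : Fin n := ⟨0, hn⟩ with hi0
  set T : Set (Fin n → ZMod 3) := {v | v i0 = 1} with hTdef
  have hTsf : AddSumFree T := by
    intro a ha b hb hab
    have ha' : a i0 = 1 := ha
    have hb' : b i0 = 1 := hb
    have hab' : a i0 + b i0 = 1 := hab
    rw [ha', hb'] at hab'
    revert hab'
    decide
  set e : Fin n → ZMod 3 := Pi.single i0 1 with hedef
  have he : e i0 = 1 := Pi.single_eq_same i0 1
  have hT0 : {v : Fin n → ZMod 3 | v i0 = 0} = (fun v => (-e) + v) '' T := by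
    ext w
    constructor
    · intro hw
      refine ⟨e + w, ?_, neg_add_cancel_left e w⟩
      show (e + w) i0 = 1
      have hw' : w i0 = 0 := hw
      simp [Pi.add_apply, he, hw']
    · rintro ⟨v, hv, rfl⟩
      have hv' : v i0 = 1 := hv
      show (-e + v) i0 = 0
      simp [Pi.add_apply, Pi.neg_apply, he, hv']
  have hT2 : {v : Fin n → ZMod 3 | v i0 = 2} = (fun v => e + v) '' T := by
    ext w
    constructor
    · intro hw
      refine ⟨-e + w, ?_, add_neg_cancel_left e w⟩
      show (-e + w) i0 = 1
      have hw' : w i0 = 2 := hw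
      simp only [Pi.add_apply, Pi.neg_apply, he, hw']
      decide
    · rintro ⟨v, hv, rfl⟩
      have hv' : v i0 = 1 := hv
      show (e + v) i0 = 2
      simp only [Pi.add_apply, he, hv']
      decide
  have hcover : (Set.univ : Set (Fin n → ZMod 3))
      ⊆ {v : Fin n → ZMod 3 | v i0 = 0} ∪ T ∪ {v : Fin n → ZMod 3 | v i0 = 2} := by
    intro v _
    have h3 : ∀ a : ZMod 3, a = 0 ∨ a = 1 ∨ a = 2 := by decide
    rcases h3 (v i0) with h | h | h
    · exact Or.inl (Or.inl h)
    · exact Or.inl (Or.inr h)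
    · exact Or.inr h
  have hinje : Function.Injective (fun v : Fin n → ZMod 3 => -e + v) :=
    fun a b h => by simpa using h
  have hinje' : Function.Injective (fun v : Fin n → ZMod 3 => e + v) :=
    fun a b h => by simpa using h
  have hTcard : (Set.univ : Set (Fin n → ZMod 3)).ncard ≤ 3 * T.ncard := by
    calc (Set.univ : Set (Fin n → ZMod 3)).ncard
        ≤ ({v : Fin n → ZMod 3 | v i0 = 0} ∪ T ∪ {v : Fin n → ZMod 3 | v i0 = 2}).ncard :=
          Set.ncard_le_ncard hcover (hfin _)
      _ ≤ ({v : Fin n → ZMod 3 | v i0 = 0} ∪ T).ncard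
            + ({v : Fin n → ZMod 3 | v i0 = 2}).ncard := Set.ncard_union_le _ _
      _ ≤ ({v : Fin n → ZMod 3 | v i0 = 0}).ncard + T.ncard
            + ({v : Fin n → ZMod 3 | v i0 = 2}).ncard := by
          exact Nat.add_le_add_right (Set.ncard_union_le _ _) _
      _ = 3 * T.ncard := by
          rw [hT0, hT2, Set.ncard_image_of_injective T hinje,
            Set.ncard_image_of_injective T hinje']
          ring
  have hTS : T.ncard ≤ S.ncard := hmax T hTsf
  omega
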